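/- Let E be a real inner product space, ε ∈ ℝ, and for each n ∈ ℤ let V_n : ℝ → E be differentiable with ⟨V_n, V_n⟩ = 1 and ⟨V_{n+1}, V_{n−1}⟩ ≠ 1 for all n, x, satisfying the lattice (V3): V_n′ = [(⟨V_n,V_{n−1}⟩+ε)(V_{n+1}+εV_n) − (⟨V_{n+1},V_n⟩+ε)(V_{n−1}+εV_n)] / (⟨V_{n+1},V_{n−1}⟩ − 1). Then the sequence Ṽ_n := (−1)ⁿ V_n satisfies ⟨Ṽ_n, Ṽ_n⟩ = 1, ⟨Ṽ_{n+1}, Ṽ_{n−1}⟩ ≠ 1, and the same lattice (V3) with ε replaced by −ε. -/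

import Mathlib

/-- the flip map `Ṽ_n = (−1)ⁿ V_n` maps solutions of lattice
(V3) with parameter `ε` to solutions of (V3) with parameter `−ε`. -/
theorem V3_flip_map
    (E : Type*) [NormedAddCommGroup E] [InnerProductSpace ℝ E]
    (ε : ℝ) (V : ℤ → ℝ → E)
    (hunit : ∀ (n : ℤ) (x : ℝ), (inner ℝ (V n x) (V n x) : ℝ) = 1)
    (hden : ∀ (n : ℤ) (x : ℝ), (inner ℝ (V (n+1) x) (V (n-1) x) : ℝ) ≠ 1)
    (hV : ∀ (n : ℤ) (x : ℝ), HasDerivAt (V n)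
      (((inner ℝ (V (n+1) x) (V (n-1) x) : ℝ) - 1)⁻¹ •
        (((inner ℝ (V n x) (V (n-1) x) : ℝ) + ε) • (V (n+1) x + ε • V n x)
          - ((inner ℝ (V (n+1) x) (V n x) : ℝ) + ε) • (V (n-1) x + ε • V n x))) x)
    (W : ℤ → ℝ → E)
    (hW : ∀ (n : ℤ) (x : ℝ), W n x = ((-1 : ℝ)^n) • V n x) :
    (∀ (n : ℤ) (x : ℝ), (inner ℝ (W n x) (W n x) : ℝ) = 1) ∧
    (∀ (n : ℤ) (x : ℝ), (inner ℝ (W (n+1) x) (W (n-1) x) : ℝ) ≠ 1) ∧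
    (∀ (n : ℤ) (x : ℝ), HasDerivAt (W n)
      (((inner ℝ (W (n+1) x) (W (n-1) x) : ℝ) - 1)⁻¹ •
        (((inner ℝ (W n x) (W (n-1) x) : ℝ) + (-ε)) • (W (n+1) x + (-ε) • W n x)
          - ((inner ℝ (W (n+1) x) (W n x) : ℝ) + (-ε)) •
              (W (n-1) x + (-ε) • W n x))) x) := by
  have hne : (-1:ℝ) ≠ 0 := by norm_num
  refine ⟨?_, ?_, ?_⟩
  · intro n x
    rw [hW, real_inner_smul_left, real_inner_smul_right, hunit, mul_one,
      ← mul_zpow]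
    norm_num
  · intro n x
    rw [hW, hW, real_inner_smul_left, real_inner_smul_right]
    have h1 : ((-1:ℝ))^(n+1) * ((-1:ℝ))^(n-1) = 1 := by
      rw [← zpow_add₀ hne]
      have : n + 1 + (n - 1) = 2 * n := by ring
      rw [this, zpow_mul]
      norm_num
    rw [← mul_assoc, h1, one_mul]
    exact hden n x
  · intro n x
    have h1 : ((-1:ℝ))^(n+1) = -((-1:ℝ)^n) := by
      rw [zpow_add₀ hne]; ring
    have h2 : ((-1:ℝ))^(n-1) = -((-1:ℝ)^n) := by
      rw [zpow_sub₀ hne]; field_simp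
    have hfn : W n = fun y => ((-1:ℝ)^n) • V n y := funext fun y => hW n y
    rw [hfn]
    simp only [hW, h1, h2]
    have key := (hV n x).const_smul ((-1:ℝ)^n)
    convert key using 1
    · rfl
    have hcase : ((-1:ℝ)^n) = 1 ∨ ((-1:ℝ)^n) = -1 := by
      rcases Int.even_or_odd n with ⟨k, hk⟩ | ⟨k, hk⟩
      · left; rw [hk, ← two_mul, zpow_mul]; norm_num
      · right; rw [hk, zpow_add₀ hne, zpow_mul]; norm_num
    rcases hcase with h | h <;> rw [h] <;>
      simp only [one_smul, neg_smul, neg_neg, smul_neg, inner_neg_left,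
        inner_neg_right, real_inner_smul_left, real_inner_smul_right] <;>
      match_scalars <;> ring
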